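/- Let H be a separable real Hilbert space with a Hilbert basis e : ℕ → H and let B be any bounded operator on H. Then ∑' n, ‖(exp B − 1) (e n)‖² ≤ Real.exp (2 * ‖B‖) * ∑' n, ‖B (e n)‖². In particular, if B is Hilbert–Schmidt then so is exp B − 1, and exp is continuous at 0 with respect to the Hilbert–Schmidt norm. -/

import Mathlib

open ContinuousLinearMap
open scoped ENNReal NNReal

section Aux

variable {H : Type*} [NormedAddCommGroup H] [InnerProductSpace ℝ H] [CompleteSpace H]

omit [CompleteSpace H] in
lemma aux_norm_pow_le (B : H →L[ℝ] H) (k : ℕ) : ‖B ^ k‖ ≤ ‖B‖ ^ k := by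
  cases k with
  | zero => rw [pow_zero, pow_zero]; exact norm_id_le
  | succ n => exact norm_pow_le' B n.succ_pos

omit [CompleteSpace H] in
lemma aux_bound (B : H →L[ℝ] H) (k : ℕ) :
    ‖((Nat.factorial (k+1) : ℝ))⁻¹ • B ^ k‖ ≤ ‖B‖ ^ k / (Nat.factorial k : ℝ) := by
  rw [norm_smul (((k+1).factorial : ℝ))⁻¹ (B ^ k), norm_inv, Real.norm_natCast,
    div_eq_inv_mul]
  have h1 : ((Nat.factorial (k+1) : ℝ))⁻¹ ≤ ((Nat.factorial k : ℝ))⁻¹ := by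
    apply inv_anti₀
    · exact_mod_cast Nat.factorial_pos k
    · exact_mod_cast Nat.factorial_le (Nat.le_succ k)
  exact mul_le_mul h1 (aux_norm_pow_le B k) (norm_nonneg _) (inv_nonneg.2 (Nat.cast_nonneg _))

omit [CompleteSpace H] in
lemma aux_summable_C_norm (B : H →L[ℝ] H) :
    Summable fun k : ℕ => ‖((Nat.factorial (k+1) : ℝ))⁻¹ • B ^ k‖ :=
  Summable.of_nonneg_of_le (fun _ => norm_nonneg _) (aux_bound B)
    (Real.summable_pow_div_factorial ‖B‖)

lemma aux_summable_C (B : H →L[ℝ] H) :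
    Summable fun k : ℕ => ((Nat.factorial (k+1) : ℝ))⁻¹ • B ^ k :=
  (aux_summable_C_norm B).of_norm

set_option synthInstance.maxHeartbeats 1000000 in
lemma aux_factored (B : H →L[ℝ] H) :
    NormedSpace.exp B - 1 =
      (∑' k : ℕ, ((Nat.factorial (k+1) : ℝ))⁻¹ • B ^ k) * B := by
  rw [← (aux_summable_C B).tsum_mul_right B]
  have h1 : NormedSpace.exp B = ∑' k : ℕ, ((Nat.factorial k : ℝ))⁻¹ • B ^ k := by
    rw [NormedSpace.exp_eq_tsum (𝕂 := ℝ)]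
  have h2 : (∑' k : ℕ, ((Nat.factorial k : ℝ))⁻¹ • B ^ k)
      = (Nat.factorial 0 : ℝ)⁻¹ • B ^ 0
        + ∑' k : ℕ, ((Nat.factorial (k+1) : ℝ))⁻¹ • B ^ (k+1) :=
    Summable.tsum_eq_zero_add (NormedSpace.expSeries_summable' (𝕂 := ℝ) B)
  rw [h1, h2]
  simp only [Nat.factorial_zero, Nat.cast_one, inv_one, pow_zero, one_smul]
  rw [add_sub_cancel_left]
  exact tsum_congr fun k => by rw [pow_succ, smul_mul_assoc]

lemma aux_pointwise (B : H →L[ℝ] H) (x : H) :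
    ‖(NormedSpace.exp B - 1) x‖ ≤ Real.exp ‖B‖ * ‖B x‖ := by
  set C := ∑' k : ℕ, ((Nat.factorial (k+1) : ℝ))⁻¹ • B ^ k with hC
  have hCn : ‖C‖ ≤ Real.exp ‖B‖ := by
    have h1 : ‖C‖ ≤ ∑' k : ℕ, ‖((Nat.factorial (k+1) : ℝ))⁻¹ • B ^ k‖ :=
      norm_tsum_le_tsum_norm (aux_summable_C_norm B)
    have h2 : ∑' k : ℕ, ‖((Nat.factorial (k+1) : ℝ))⁻¹ • B ^ k‖
        ≤ ∑' k : ℕ, ‖B‖ ^ k / (Nat.factorial k : ℝ) :=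
      Summable.tsum_le_tsum (aux_bound B) (aux_summable_C_norm B)
        (Real.summable_pow_div_factorial ‖B‖)
    have h3 : ∑' k : ℕ, ‖B‖ ^ k / (Nat.factorial k : ℝ) = Real.exp ‖B‖ := by
      rw [Real.exp_eq_exp_ℝ, NormedSpace.exp_eq_tsum_div]
    linarith
  have hfx : (NormedSpace.exp B - 1) x = C (B x) := by
    rw [aux_factored B, ← hC]; rfl
  rw [hfx]
  calc ‖C (B x)‖ ≤ ‖C‖ * ‖B x‖ := C.le_opNorm _
    _ ≤ Real.exp ‖B‖ * ‖B x‖ := by gcongr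

end Aux

/-- Hilbert–Schmidt bound for the exponential: for any bounded operator `B`,
`∑' n, ‖(exp B − 1)(e n)‖² ≤ exp(2‖B‖) · ∑' n, ‖B (e n)‖²` (sums taken in `[0, ∞]` so
that divergent sums are `∞`); in particular, if `B` is Hilbert–Schmidt then so is
`exp B − 1`. -/
theorem stmt_5 {H : Type*} [NormedAddCommGroup H] [InnerProductSpace ℝ H] [CompleteSpace H]
    (e : HilbertBasis ℕ ℝ H)
    (B : H →L[ℝ] H) :
    (∑' n, (‖(NormedSpace.exp B - 1) (e n)‖₊ : ℝ≥0∞) ^ 2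
        ≤ ENNReal.ofReal (Real.exp (2 * ‖B‖)) * ∑' n, (‖B (e n)‖₊ : ℝ≥0∞) ^ 2) ∧
      ((Summable fun n => ‖B (e n)‖ ^ 2) →
        Summable fun n => ‖(NormedSpace.exp B - 1) (e n)‖ ^ 2) := by
  have key : ∑' n, (‖(NormedSpace.exp B - 1) (e n)‖₊ : ℝ≥0∞) ^ 2
      ≤ ENNReal.ofReal (Real.exp (2 * ‖B‖)) * ∑' n, (‖B (e n)‖₊ : ℝ≥0∞) ^ 2 := by
    have hpt : ∀ n, (‖(NormedSpace.exp B - 1) (e n)‖₊ : ℝ≥0∞) ^ 2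
        ≤ ENNReal.ofReal (Real.exp (2 * ‖B‖)) * (‖B (e n)‖₊ : ℝ≥0∞) ^ 2 := by
      intro n
      have h := aux_pointwise B (e n)
      have h2 : (‖(NormedSpace.exp B - 1) (e n)‖₊ : ℝ≥0∞)
          ≤ ENNReal.ofReal (Real.exp ‖B‖) * (‖B (e n)‖₊ : ℝ≥0∞) := by
        rw [← ENNReal.ofReal_coe_nnreal, coe_nnnorm, ← ENNReal.ofReal_coe_nnreal, coe_nnnorm,
          ← ENNReal.ofReal_mul (Real.exp_nonneg _)]
        exact ENNReal.ofReal_le_ofReal h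
      calc (‖(NormedSpace.exp B - 1) (e n)‖₊ : ℝ≥0∞) ^ 2
          ≤ (ENNReal.ofReal (Real.exp ‖B‖) * (‖B (e n)‖₊ : ℝ≥0∞)) ^ 2 := by gcongr
        _ = ENNReal.ofReal (Real.exp (2 * ‖B‖)) * (‖B (e n)‖₊ : ℝ≥0∞) ^ 2 := by
            rw [mul_pow, ← ENNReal.ofReal_pow (Real.exp_nonneg _), ← Real.exp_nat_mul]
            norm_num
    calc ∑' n, (‖(NormedSpace.exp B - 1) (e n)‖₊ : ℝ≥0∞) ^ 2
        ≤ ∑' n, ENNReal.ofReal (Real.exp (2 * ‖B‖)) * (‖B (e n)‖₊ : ℝ≥0∞) ^ 2 :=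
          ENNReal.tsum_le_tsum hpt
      _ = _ := ENNReal.tsum_mul_left
  refine ⟨key, fun hs => ?_⟩
  have hfin : ∑' n, (‖B (e n)‖₊ : ℝ≥0∞) ^ 2 ≠ ⊤ := by
    have : Summable fun n => (‖B (e n)‖₊ : ℝ≥0) ^ 2 := by
      rw [← NNReal.summable_coe]
      simpa using hs
    simpa [← ENNReal.coe_pow] using ENNReal.tsum_coe_ne_top_iff_summable.2 this
  have hlt : ∑' n, (‖(NormedSpace.exp B - 1) (e n)‖₊ : ℝ≥0∞) ^ 2 ≠ ⊤ :=
    ne_top_of_le_ne_top (ENNReal.mul_ne_top ENNReal.ofReal_ne_top hfin) key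
  have h4 : Summable fun n => (‖(NormedSpace.exp B - 1) (e n)‖₊ : ℝ≥0) ^ 2 := by
    rw [← ENNReal.tsum_coe_ne_top_iff_summable]
    simpa [← ENNReal.coe_pow] using hlt
  rw [← NNReal.summable_coe] at h4
  simpa using h4
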